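/- Let A be a fixed integer-valued matrix of dimension ℓ×k and b a fixed integer-valued vector of dimension ℓ, such that the pair (A,b) is irredundant and A is irredundant and does not satisfy property (*). If p = p(n) satisfies p·n^{1/3} → 0, then with high probability Breaker wins the (A,b)-game on [n]_p. -/

import Mathlib

variable {V : Type*} [DecidableEq V]

/-- Maker has a winning strategy in the Maker-Breaker game, given whose turn it is
(`true` = Maker to move), the remaining unclaimed board `R`, and Maker's current set `M`.
Maker wins if at the end of the game (all elements claimed) her set satisfies `win`. -/
def makerWinsAux (win : Finset V → Prop) : Bool → Finset V → Finset V → Prop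
  | true, R, M =>
      if R.Nonempty then ∃ x, ∃ _h : x ∈ R, makerWinsAux win false (R.erase x) (insert x M)
      else win M
  | false, R, M =>
      if R.Nonempty then ∀ x, x ∈ R → makerWinsAux win true (R.erase x) M
      else win M
termination_by _ R _ => R.card
decreasing_by
  · exact Finset.card_erase_lt_of_mem ‹x ∈ R›
  · exact Finset.card_erase_lt_of_mem ‹x ∈ R›

/-- Breaker has a winning strategy (Maker moves first). -/
def breakerWinsAux (win : Finset V → Prop) : Bool → Finset V → Finset V → Prop
  | true, R, M =>
      if R.Nonempty then ∀ x, x ∈ R → breakerWinsAux win false (R.erase x) (insert x M)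
      else ¬ win M
  | false, R, M =>
      if R.Nonempty then ∃ x, ∃ _h : x ∈ R, breakerWinsAux win true (R.erase x) M
      else ¬ win M
termination_by _ R _ => R.card
decreasing_by
  · exact Finset.card_erase_lt_of_mem ‹x ∈ R›
  · exact Finset.card_erase_lt_of_mem ‹x ∈ R›

/-- Maker wins the Maker-Breaker game on board `X` with winning condition `win`. -/
def MakerWins (win : Finset V → Prop) (X : Finset V) : Prop := makerWinsAux win true X ∅

/-- Breaker wins the Maker-Breaker game on board `X` with winning condition `win`. -/
def BreakerWins (win : Finset V → Prop) (X : Finset V) : Prop := breakerWinsAux win true X ∅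

/-- Maker's winning condition in the `(A,b)`-game: her claimed set `M` contains all entries of
some `k`-distinct solution (in positive integers) of `A x = b`. -/
def RadoWin {l k : ℕ} (A : Matrix (Fin l) (Fin k) ℤ) (b : Fin l → ℤ) (M : Finset ℕ) : Prop :=
  ∃ x : Fin k → ℕ, Function.Injective x ∧ (∀ i, x i ∈ M) ∧
    A.mulVec (fun i => (x i : ℤ)) = b

/-- The pair `(A,b)` is irredundant: `A x = b` has a `k`-distinct solution in positive integers. -/
def PairIrredundant {l k : ℕ} (A : Matrix (Fin l) (Fin k) ℤ) (b : Fin l → ℤ) : Prop :=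
  ∃ x : Fin k → ℕ, Function.Injective x ∧ (∀ i, 0 < x i) ∧
    A.mulVec (fun i => (x i : ℤ)) = b

/-- The matrix `A` is irredundant: `A x = 0` has a `k`-distinct solution in positive integers. -/
def MatIrredundant {l k : ℕ} (A : Matrix (Fin l) (Fin k) ℤ) : Prop :=
  PairIrredundant A 0

/-- Property (*): no rational linear combination of the rows of `A` has exactly two
nonzero entries. -/
def PropertyStar {l k : ℕ} (A : Matrix (Fin l) (Fin k) ℤ) : Prop :=
  ∀ c : Fin l → ℚ,
    (Finset.univ.filter fun j : Fin k => (∑ i, c i * (A i j : ℚ)) ≠ 0).card ≠ 2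

/-- The rank (over `ℚ`) of an integer matrix. -/
noncomputable def rankQ {l k : ℕ} (A : Matrix (Fin l) (Fin k) ℤ) : ℕ :=
  (A.map (Int.cast : ℤ → ℚ)).rank

/-- The rank (over `ℚ`) of the matrix `A_{W̄}` formed by the columns of `A` indexed by the
complement of `W`. -/
noncomputable def rankRestrict {l k : ℕ} (A : Matrix (Fin l) (Fin k) ℤ)
    (W : Finset (Fin k)) : ℕ :=
  ((A.map (Int.cast : ℤ → ℚ)).submatrix id (fun j : {j : Fin k // j ∈ Wᶜ} => j.1)).rank

/-- The parameter `m(A)`. -/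
noncomputable def mIndex {l k : ℕ} (A : Matrix (Fin l) (Fin k) ℤ) : ℝ :=
  sSup {x : ℝ | ∃ W : Finset (Fin k), 2 ≤ W.card ∧
    x = ((W.card : ℝ) - 1) / (((W.card : ℝ) - 1) + (rankRestrict A W : ℝ) - (rankQ A : ℝ))}

/-- `A` (an `ℓ×k` matrix of full rank `ℓ`) is strictly balanced. -/
def StrictlyBalanced {l k : ℕ} (A : Matrix (Fin l) (Fin k) ℤ) : Prop :=
  ∀ W : Finset (Fin k), 2 ≤ W.card → W.card < k →
    ((W.card : ℝ) - 1) / (((W.card : ℝ) - 1) + (rankRestrict A W : ℝ) - (l : ℝ))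
      < ((k : ℝ) - 1) / ((k : ℝ) - 1 - (l : ℝ))

open Classical in
/-- `μ(n,A,b)`: the maximum size of a subset of `[n] = {1,…,n}` containing no `k`-distinct
solution to `A x = b`. -/
noncomputable def muMax {l k : ℕ} (n : ℕ) (A : Matrix (Fin l) (Fin k) ℤ) (b : Fin l → ℤ) : ℕ :=
  (((Finset.Icc 1 n).powerset.filter fun S => ¬ RadoWin A b S).sup Finset.card)

open Classical in
/-- The probability that the random subset `[n]_p` (each element of `{1,…,n}` included
independently with probability `p`) satisfies the property `P`. -/
noncomputable def probRandomSubset (n : ℕ) (p : ℝ) (P : Finset ℕ → Prop) : ℝ :=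
  ∑ S ∈ (Finset.Icc 1 n).powerset,
    if P S then p ^ S.card * (1 - p) ^ (n - S.card) else 0

/-- Maker wins the `(A,b)`-game on the board `X` (Maker moves first). -/
def MakerWinsRado {l k : ℕ} (A : Matrix (Fin l) (Fin k) ℤ) (b : Fin l → ℤ)
    (X : Finset ℕ) : Prop :=
  MakerWins (RadoWin A b) X

/-- Breaker wins the `(A,b)`-game on the board `X` (Maker moves first). -/
def BreakerWinsRado {l k : ℕ} (A : Matrix (Fin l) (Fin k) ℤ) (b : Fin l → ℤ)
    (X : Finset ℕ) : Prop :=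
  BreakerWins (RadoWin A b) X

section Aux
variable {V : Type*} [DecidableEq V]

theorem pairing_breaker' (win : Finset V → Prop) (X : Finset V) (rel : V → V → Prop)
    (hsym : ∀ u v, rel u v → rel v u)
    (hfun : ∀ u v w, rel u v → rel u w → v = w)
    (hirr : ∀ u, ¬ rel u u)
    (hwin : ∀ M : Finset V, M ⊆ X → win M → ∃ u v, rel u v ∧ u ∈ M ∧ v ∈ M) :
    ∀ R M : Finset V, M ⊆ X → R ⊆ X → Disjoint M R →
      (∀ u v, rel u v → u ∈ M → v ∉ R ∧ v ∉ M) →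
      breakerWinsAux win true R M := by
  intro R
  induction R using Finset.strongInduction with
  | _ R ih =>
    intro M hMX hRX hdisj hinv
    rw [breakerWinsAux]
    split
    case isTrue hR =>
      intro x hx
      have hxM : x ∉ M := fun h => (Finset.disjoint_left.mp hdisj h) hx
      have hM'X : insert x M ⊆ X := Finset.insert_subset (hRX hx) hMX
      rw [breakerWinsAux]
      split
      case isTrue hR' =>
        by_cases hpart : ∃ v, rel x v ∧ v ∈ R.erase x
        · obtain ⟨v, hrv, hvR'⟩ := hpart
          refine ⟨v, hvR', ?_⟩
          have hvx : v ≠ x := (Finset.mem_erase.mp hvR').1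
          have hvR : v ∈ R := (Finset.mem_erase.mp hvR').2
          have hvM : v ∉ M := fun h => (Finset.disjoint_left.mp hdisj h) hvR
          apply ih ((R.erase x).erase v)
            (Finset.ssubset_of_subset_of_ssubset (Finset.erase_subset _ _)
              (Finset.erase_ssubset hx)) _ hM'X
            (((Finset.erase_subset _ _).trans (Finset.erase_subset _ _)).trans hRX)
          · rw [Finset.disjoint_left]
            intro a haM' haR
            have haR2 := Finset.mem_of_mem_erase (Finset.mem_of_mem_erase haR)
            rcases Finset.mem_insert.mp haM' with h | h
            · exact (Finset.mem_erase.mp (Finset.mem_of_mem_erase haR)).1 h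
            · exact (Finset.disjoint_left.mp hdisj h) haR2
          · intro u w hrw huM'
            rcases Finset.mem_insert.mp huM' with h | h
            · rw [h] at hrw
              have hwv : w = v := hfun x w v hrw hrv
              rw [hwv]
              refine ⟨Finset.notMem_erase v _, ?_⟩
              simp only [Finset.mem_insert]
              push_neg
              exact ⟨hvx, hvM⟩
            · obtain ⟨h1, h2⟩ := hinv u w hrw h
              constructor
              · intro hw; exact h1 (Finset.mem_of_mem_erase (Finset.mem_of_mem_erase hw))
              · simp only [Finset.mem_insert]
                push_neg
                exact ⟨fun hwx => h1 (hwx ▸ hx), h2⟩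
        · push_neg at hpart
          obtain ⟨y, hy⟩ := hR'
          refine ⟨y, hy, ?_⟩
          have hyx : y ≠ x := (Finset.mem_erase.mp hy).1
          have hyR : y ∈ R := (Finset.mem_erase.mp hy).2
          apply ih ((R.erase x).erase y)
            (Finset.ssubset_of_subset_of_ssubset (Finset.erase_subset _ _)
              (Finset.erase_ssubset hx)) _ hM'X
            (((Finset.erase_subset _ _).trans (Finset.erase_subset _ _)).trans hRX)
          · rw [Finset.disjoint_left]
            intro a haM' haR
            have haR2 := Finset.mem_of_mem_erase (Finset.mem_of_mem_erase haR)
            rcases Finset.mem_insert.mp haM' with h | h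
            · exact (Finset.mem_erase.mp (Finset.mem_of_mem_erase haR)).1 h
            · exact (Finset.disjoint_left.mp hdisj h) haR2
          · intro u w hrw huM'
            rcases Finset.mem_insert.mp huM' with h | h
            · rw [h] at hrw
              have hwR' : w ∉ R.erase x := fun hc => hpart w hrw hc
              have hwx : w ≠ x := fun hc => hirr x (hc ▸ hrw)
              have hwR : w ∉ R := fun hc => hwR' (Finset.mem_erase.mpr ⟨hwx, hc⟩)
              have hwM : w ∉ M := by
                intro hc
                exact (hinv w x (hsym _ _ hrw) hc).1 hx
              constructor
              · intro hc; exact hwR (Finset.mem_of_mem_erase (Finset.mem_of_mem_erase hc))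
              · simp only [Finset.mem_insert]; push_neg; exact ⟨hwx, hwM⟩
            · obtain ⟨h1, h2⟩ := hinv u w hrw h
              constructor
              · intro hw; exact h1 (Finset.mem_of_mem_erase (Finset.mem_of_mem_erase hw))
              · simp only [Finset.mem_insert]
                push_neg
                exact ⟨fun hwx => h1 (hwx ▸ hx), h2⟩
      case isFalse hR' =>
        intro hwinM'
        obtain ⟨u, v, hrv, huM', hvM'⟩ := hwin _ hM'X hwinM'
        rcases Finset.mem_insert.mp huM' with h | h
        · rw [h] at hrv
          rcases Finset.mem_insert.mp hvM' with h2 | h2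
          · rw [h2] at hrv; exact hirr x hrv
          · exact (hinv v x (hsym _ _ hrv) h2).1 hx
        · rcases Finset.mem_insert.mp hvM' with h2 | h2
          · rw [h2] at hrv
            exact (hinv u x hrv h).1 hx
          · exact (hinv u v hrv h).2 h2
    case isFalse hR =>
      intro hwinM
      obtain ⟨u, v, hrv, huM, hvM⟩ := hwin _ hMX hwinM
      exact (hinv u v hrv huM).2 hvM

theorem sum_weight_one (p : ℝ) (T : Finset V) :
    ∑ S ∈ T.powerset, p ^ S.card * (1 - p) ^ (T.card - S.card) = 1 := by
  calc ∑ S ∈ T.powerset, p ^ S.card * (1-p)^(T.card - S.card)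
      = ∑ S ∈ T.powerset, (∏ _i ∈ S, p) * ∏ _i ∈ T \ S, (1-p) := by
        apply Finset.sum_congr rfl; intro S hS
        rw [Finset.prod_const, Finset.prod_const, Finset.card_sdiff_of_subset (Finset.mem_powerset.mp hS)]
    _ = ∏ _i ∈ T, (p + (1-p)) := (Finset.prod_add _ _ _).symm
    _ = 1 := by simp

theorem sum_weight_superset (p : ℝ) (T t : Finset V) (ht : t ⊆ T) :
    ∑ S ∈ T.powerset.filter (fun S => t ⊆ S), p ^ S.card * (1 - p) ^ (T.card - S.card)
      = p ^ t.card := by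
  have key : ∑ S ∈ T.powerset.filter (fun S => t ⊆ S), p ^ S.card * (1 - p) ^ (T.card - S.card)
      = ∑ S' ∈ (T \ t).powerset, p ^ t.card * (p ^ S'.card * (1 - p) ^ ((T \ t).card - S'.card)) := by
    apply Finset.sum_nbij' (fun S => S \ t) (fun S' => S' ∪ t)
    · intro S hS
      simp only [Finset.mem_filter, Finset.mem_powerset] at hS
      exact Finset.mem_powerset.mpr (Finset.sdiff_subset_sdiff hS.1 le_rfl)
    · intro S' hS'
      simp only [Finset.mem_powerset] at hS'
      simp only [Finset.mem_filter, Finset.mem_powerset]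
      exact ⟨Finset.union_subset (hS'.trans (Finset.sdiff_subset)) ht, Finset.subset_union_right⟩
    · intro S hS
      simp only [Finset.mem_filter, Finset.mem_powerset] at hS
      exact Finset.sdiff_union_of_subset hS.2
    · intro S' hS'
      simp only [Finset.mem_powerset] at hS'
      have : Disjoint S' t := Finset.disjoint_of_subset_left hS' Finset.sdiff_disjoint
      rw [Finset.union_sdiff_right, Finset.sdiff_eq_self_of_disjoint this]
    · intro S hS
      simp only [Finset.mem_filter, Finset.mem_powerset] at hS
      have hcard : S.card = (S \ t).card + t.card := by
        rw [Finset.card_sdiff_of_subset hS.2]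
        have := Finset.card_le_card hS.2
        omega
      have hexp : T.card - S.card = (T \ t).card - (S \ t).card := by
        rw [Finset.card_sdiff_of_subset hS.2, Finset.card_sdiff_of_subset ht]
        have h1 := Finset.card_le_card hS.2
        have h2 := Finset.card_le_card hS.1
        have h3 := Finset.card_le_card ht
        omega
      rw [hexp, hcard, pow_add]
      ring
  rw [key, ← Finset.mul_sum, sum_weight_one, mul_one]

end Aux


theorem not_star_breaker_win {l k : ℕ} (A : Matrix (Fin l) (Fin k) ℤ) (b : Fin l → ℤ)
    (hAb : PairIrredundant A b) (hA : MatIrredundant A) (hstar : ¬ PropertyStar A)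
    (p : ℕ → ℝ) (hp : ∀ n, 0 ≤ p n ∧ p n ≤ 1)
    (hp0 : Filter.Tendsto (fun n : ℕ => p n * (n : ℝ) ^ ((1 : ℝ) / 3))
      Filter.atTop (nhds 0)) :
    Filter.Tendsto
      (fun n => probRandomSubset n (p n) (fun S => BreakerWinsRado A b S))
      Filter.atTop (nhds 1) := by
  classical
  rw [PropertyStar] at hstar
  push_neg at hstar
  obtain ⟨c, hc⟩ := hstar
  obtain ⟨j₁, j₂, hj12, hjeq⟩ := Finset.card_eq_two.mp hc
  set α := ∑ i, c i * (A i j₁ : ℚ) with hαdef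
  set β := ∑ i, c i * (A i j₂ : ℚ) with hβdef
  set δ := ∑ i, c i * (b i : ℚ) with hδdef
  have hα : α ≠ 0 := by
    have : j₁ ∈ Finset.univ.filter (fun j => (∑ i, c i * (A i j : ℚ)) ≠ 0) := by
      rw [hjeq]; simp
    exact (Finset.mem_filter.mp this).2
  have hβ : β ≠ 0 := by
    have : j₂ ∈ Finset.univ.filter (fun j => (∑ i, c i * (A i j : ℚ)) ≠ 0) := by
      rw [hjeq]; simp
    exact (Finset.mem_filter.mp this).2
  have hother : ∀ j, j ≠ j₁ → j ≠ j₂ → (∑ i, c i * (A i j : ℚ)) = 0 := by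
    intro j h1 h2
    by_contra hne
    have : j ∈ Finset.univ.filter (fun j => (∑ i, c i * (A i j : ℚ)) ≠ 0) :=
      Finset.mem_filter.mpr ⟨Finset.mem_univ _, hne⟩
    rw [hjeq] at this
    simp only [Finset.mem_insert, Finset.mem_singleton] at this
    tauto
  have hkey : ∀ (x : Fin k → ℕ), A.mulVec (fun i => (x i : ℤ)) = b →
      α * (x j₁ : ℚ) + β * (x j₂ : ℚ) = δ := by
    intro x hx
    have hrow : ∀ i, ∑ j, (A i j : ℚ) * (x j : ℚ) = (b i : ℚ) := by
      intro i
      have h := congrFun hx i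
      simp only [Matrix.mulVec, dotProduct] at h
      exact_mod_cast h
    have hswap : ∑ j, (∑ i, c i * (A i j : ℚ)) * (x j : ℚ) = δ := by
      calc ∑ j, (∑ i, c i * (A i j : ℚ)) * (x j : ℚ)
          = ∑ j, ∑ i, c i * ((A i j : ℚ) * (x j : ℚ)) := by
            apply Finset.sum_congr rfl; intro j _
            rw [Finset.sum_mul]
            apply Finset.sum_congr rfl; intro i _
            ring
        _ = ∑ i, ∑ j, c i * ((A i j : ℚ) * (x j : ℚ)) := Finset.sum_comm
        _ = ∑ i, c i * (b i : ℚ) := by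
            apply Finset.sum_congr rfl; intro i _
            rw [← Finset.mul_sum, hrow]
    have hsub : ∑ j ∈ ({j₁, j₂} : Finset (Fin k)), (∑ i, c i * (A i j : ℚ)) * (x j : ℚ)
        = ∑ j, (∑ i, c i * (A i j : ℚ)) * (x j : ℚ) := by
      apply Finset.sum_subset (Finset.subset_univ _)
      intro j _ hj
      simp only [Finset.mem_insert, Finset.mem_singleton] at hj
      push_neg at hj
      rw [hother j hj.1 hj.2, zero_mul]
    rw [← hswap, ← hsub, Finset.sum_pair hj12]
  -- the pair relation
  set Rel : ℕ → ℕ → Prop := fun u v => u ≠ v ∧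
    (α * (u : ℚ) + β * (v : ℚ) = δ ∨ α * (v : ℚ) + β * (u : ℚ) = δ) with hReldef
  have hRelsym : ∀ u v, Rel u v → Rel v u := by
    rintro u v ⟨h1, h2⟩
    exact ⟨h1.symm, h2.symm⟩
  have hBreak : ∀ S : Finset ℕ,
      (∀ u v w, u ∈ S → v ∈ S → w ∈ S → Rel u v → Rel u w → v = w) →
      BreakerWinsRado A b S := by
    intro S hS
    apply pairing_breaker' _ S (fun u v => u ∈ S ∧ v ∈ S ∧ Rel u v)
    · rintro u v ⟨h1, h2, h3⟩
      exact ⟨h2, h1, hRelsym u v h3⟩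
    · rintro u v w ⟨hu, hv, huv⟩ ⟨_, hw, huw⟩
      exact hS u v w hu hv hw huv huw
    · rintro u ⟨_, _, h, _⟩
      exact h rfl
    · rintro M hMS ⟨x, hinj, hmem, hsol⟩
      exact ⟨x j₁, x j₂, ⟨hMS (hmem j₁), hMS (hmem j₂),
        fun h => hj12 (hinj h), Or.inl (hkey x hsol)⟩, hmem j₁, hmem j₂⟩
    · exact Finset.empty_subset _
    · exact Finset.Subset.refl S
    · exact Finset.disjoint_empty_left _
    · rintro u v _ hu
      exact absurd hu (Finset.notMem_empty u)
  -- probability estimates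
  have hbound : ∀ n : ℕ,
      1 - 4*(n:ℝ)*(p n)^3
        ≤ probRandomSubset n (p n) (fun S => BreakerWinsRado A b S) ∧
      probRandomSubset n (p n) (fun S => BreakerWinsRado A b S) ≤ 1 := by
    intro n
    obtain ⟨hq0, hq1⟩ := hp n
    set q := p n with hqdef
    set T := Finset.Icc 1 n with hTdef
    have hT : T.card = n := by rw [hTdef, Nat.card_Icc]; omega
    set W : Finset ℕ → ℝ := fun S => q ^ S.card * (1-q) ^ (n - S.card) with hWdef
    have hWnn : ∀ S, 0 ≤ W S := fun S =>
      mul_nonneg (pow_nonneg hq0 _) (pow_nonneg (by linarith) _)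
    have hsum1 : ∑ S ∈ T.powerset, W S = 1 := by
      have h := sum_weight_one q T
      rw [hT] at h
      exact h
    have hprob : ∀ P : Finset ℕ → Prop,
        probRandomSubset n q P = ∑ S ∈ T.powerset, if P S then W S else 0 := by
      intro P; rfl
    constructor
    · -- lower bound
      rw [hprob]
      set C : Finset (ℕ × ℕ × ℕ) := (T ×ˢ T ×ˢ T).filter
        (fun t => Rel t.1 t.2.1 ∧ Rel t.1 t.2.2 ∧ t.2.1 ≠ t.2.2) with hCdef
      have hCcard : (C.card : ℝ) ≤ 4 * n := by
        have hinj : Set.InjOn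
            (fun t : ℕ × ℕ × ℕ => (t.1, (decide (α * (t.2.1 : ℚ) + β * (t.1 : ℚ) = δ),
              decide (α * (t.2.2 : ℚ) + β * (t.1 : ℚ) = δ)))) C := by
          have hdet : ∀ u v v' : ℕ, Rel u v → Rel u v' →
              decide (α * (v : ℚ) + β * (u : ℚ) = δ)
                = decide (α * (v' : ℚ) + β * (u : ℚ) = δ) → v = v' := by
            intro u v v' hv hv' hdec
            by_cases h1 : α * (v : ℚ) + β * (u : ℚ) = δ
            · have h2 : α * (v' : ℚ) + β * (u : ℚ) = δ := by
                have hd : decide (α * (v' : ℚ) + β * (u : ℚ) = δ) = true := by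
                  rw [← hdec]
                  exact decide_eq_true h1
                exact of_decide_eq_true hd
              have : (v : ℚ) = (v' : ℚ) :=
                mul_left_cancel₀ hα (by linarith [h1.trans h2.symm])
              exact_mod_cast this
            · have h2 : ¬ (α * (v' : ℚ) + β * (u : ℚ) = δ) := by
                intro hc
                rw [decide_eq_true hc] at hdec
                exact h1 (of_decide_eq_true hdec)
              have e1 : α * (u : ℚ) + β * (v : ℚ) = δ := by
                rcases hv.2 with h | h
                · exact h
                · exact absurd h h1
              have e2 : α * (u : ℚ) + β * (v' : ℚ) = δ := by
                rcases hv'.2 with h | h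
                · exact h
                · exact absurd h h2
              have : (v : ℚ) = (v' : ℚ) := by
                have := e1.trans e2.symm
                exact mul_left_cancel₀ hβ (by linarith)
              exact_mod_cast this
          rintro t ht t' ht' heq
          simp only [hCdef, Finset.coe_filter, Set.mem_setOf_eq] at ht ht'
          obtain ⟨-, h1, h2, -⟩ := ht
          obtain ⟨-, h1', h2', -⟩ := ht'
          simp only [Prod.mk.injEq] at heq
          obtain ⟨h0, hb1, hb2⟩ := heq
          rw [← h0] at hb1 hb2 h1' h2'
          have e1 : t.2.1 = t'.2.1 := hdet t.1 _ _ h1 h1' hb1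
          have e2 : t.2.2 = t'.2.2 := hdet t.1 _ _ h2 h2' hb2
          exact Prod.ext h0 (Prod.ext e1 e2)
        have hmapsto : ∀ t ∈ C, (fun t : ℕ × ℕ × ℕ => (t.1,
            (decide (α * (t.2.1 : ℚ) + β * (t.1 : ℚ) = δ),
              decide (α * (t.2.2 : ℚ) + β * (t.1 : ℚ) = δ)))) t
            ∈ T ×ˢ (Finset.univ : Finset (Bool × Bool)) := by
          intro t ht
          simp only [hCdef, Finset.mem_filter, Finset.mem_product] at ht
          simp only [Finset.mem_product, Finset.mem_univ, and_true]
          exact ht.1.1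
        have := Finset.card_le_card_of_injOn _ hmapsto hinj
        have hc4 : (T ×ˢ (Finset.univ : Finset (Bool × Bool))).card = n * 4 := by
          rw [Finset.card_product, hT]
          simp [Finset.card_univ]
        calc (C.card : ℝ) ≤ ((T ×ˢ (Finset.univ : Finset (Bool × Bool))).card : ℝ) := by
              exact_mod_cast this
          _ = 4 * n := by rw [hc4]; push_cast; ring
      -- union bound
      have hunion : ∑ S ∈ T.powerset,
          (if ∃ u v w : ℕ, u ∈ S ∧ v ∈ S ∧ w ∈ S ∧ Rel u v ∧ Rel u w ∧ v ≠ w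
            then W S else 0) ≤ 4 * n * q^3 := by
        have step1 : ∑ S ∈ T.powerset,
            (if ∃ u v w : ℕ, u ∈ S ∧ v ∈ S ∧ w ∈ S ∧ Rel u v ∧ Rel u w ∧ v ≠ w
              then W S else 0)
            ≤ ∑ S ∈ T.powerset, ∑ t ∈ C,
              (if ({t.1, t.2.1, t.2.2} : Finset ℕ) ⊆ S then W S else 0) := by
          apply Finset.sum_le_sum
          intro S hS
          rw [Finset.mem_powerset] at hS
          split_ifs with hcher
          · obtain ⟨u, v, w, hu, hv, hw, huv, huw, hvw⟩ := hcher
            have htC : (u, v, w) ∈ C := by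
              simp only [hCdef, Finset.mem_filter, Finset.mem_product]
              exact ⟨⟨hS hu, hS hv, hS hw⟩, huv, huw, hvw⟩
            have hsub : ({u, v, w} : Finset ℕ) ⊆ S := by
              intro a ha
              simp only [Finset.mem_insert, Finset.mem_singleton] at ha
              rcases ha with rfl | rfl | rfl <;> assumption
            calc W S = (if ({u, v, w} : Finset ℕ) ⊆ S then W S else 0) := by
                  rw [if_pos hsub]
              _ ≤ ∑ t ∈ C, (if ({t.1, t.2.1, t.2.2} : Finset ℕ) ⊆ S then W S else 0) := by
                  apply Finset.single_le_sum (f := fun t : ℕ × ℕ × ℕ =>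
                    if ({t.1, t.2.1, t.2.2} : Finset ℕ) ⊆ S then W S else 0)
                    (fun t _ => by split_ifs <;> simp [hWnn S]) htC
          · apply Finset.sum_nonneg
            intro t _
            split_ifs
            · exact hWnn S
            · exact le_rfl
        have step2 : ∑ S ∈ T.powerset, ∑ t ∈ C,
            (if ({t.1, t.2.1, t.2.2} : Finset ℕ) ⊆ S then W S else 0)
            = ∑ t ∈ C, ∑ S ∈ T.powerset,
              (if ({t.1, t.2.1, t.2.2} : Finset ℕ) ⊆ S then W S else 0) :=
          Finset.sum_comm
        have step3 : ∀ t ∈ C, ∑ S ∈ T.powerset,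
            (if ({t.1, t.2.1, t.2.2} : Finset ℕ) ⊆ S then W S else 0) = q ^ 3 := by
          intro t ht
          simp only [hCdef, Finset.mem_filter, Finset.mem_product] at ht
          obtain ⟨⟨h1T, h2T, h3T⟩, huv, huw, hvw⟩ := ht
          have hsubT : ({t.1, t.2.1, t.2.2} : Finset ℕ) ⊆ T := by
            intro a ha
            simp only [Finset.mem_insert, Finset.mem_singleton] at ha
            rcases ha with rfl | rfl | rfl <;> assumption
          have hcard3 : ({t.1, t.2.1, t.2.2} : Finset ℕ).card = 3 := by
            rw [Finset.card_insert_of_notMem, Finset.card_insert_of_notMem,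
              Finset.card_singleton]
            · simp only [Finset.mem_singleton]
              exact hvw
            · simp only [Finset.mem_insert, Finset.mem_singleton]
              push_neg
              exact ⟨huv.1, huw.1⟩
          rw [← Finset.sum_filter]
          have := sum_weight_superset q T ({t.1, t.2.1, t.2.2} : Finset ℕ) hsubT
          rw [hT] at this
          rw [this, hcard3]
        calc ∑ S ∈ T.powerset,
            (if ∃ u v w : ℕ, u ∈ S ∧ v ∈ S ∧ w ∈ S ∧ Rel u v ∧ Rel u w ∧ v ≠ w
              then W S else 0)
            ≤ ∑ t ∈ C, ∑ S ∈ T.powerset,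
              (if ({t.1, t.2.1, t.2.2} : Finset ℕ) ⊆ S then W S else 0) := by
              rw [← step2]; exact step1
          _ = ∑ _t ∈ C, q ^ 3 := Finset.sum_congr rfl step3
          _ = C.card * q ^ 3 := by rw [Finset.sum_const, nsmul_eq_mul]
          _ ≤ 4 * n * q ^ 3 := by
              apply mul_le_mul_of_nonneg_right hCcard (by positivity)
      -- combine
      have hsplit : ∑ S ∈ T.powerset, (if BreakerWinsRado A b S then W S else 0)
          + ∑ S ∈ T.powerset, (if ¬ BreakerWinsRado A b S then W S else 0) = 1 := by
        rw [← Finset.sum_add_distrib, ← hsum1]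
        apply Finset.sum_congr rfl
        intro S _
        by_cases h : BreakerWinsRado A b S
        · rw [if_pos h, if_neg (not_not_intro h), add_zero]
        · rw [if_neg h, if_pos h, zero_add]
      have hmono : ∑ S ∈ T.powerset, (if ¬ BreakerWinsRado A b S then W S else 0)
          ≤ ∑ S ∈ T.powerset,
            (if ∃ u v w : ℕ, u ∈ S ∧ v ∈ S ∧ w ∈ S ∧ Rel u v ∧ Rel u w ∧ v ≠ w
              then W S else 0) := by
        apply Finset.sum_le_sum
        intro S _
        by_cases hch : ∃ u v w : ℕ, u ∈ S ∧ v ∈ S ∧ w ∈ S ∧ Rel u v ∧ Rel u w ∧ v ≠ w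
        · rw [if_pos hch]
          split_ifs <;> simp [hWnn S]
        · have hbr : BreakerWinsRado A b S := by
            apply hBreak
            intro u v w hu hv hw huv huw
            by_contra hne
            exact hch ⟨u, v, w, hu, hv, hw, huv, huw, hne⟩
          rw [if_neg hch, if_neg (not_not_intro hbr)]
      linarith
    · -- upper bound
      rw [hprob, ← hsum1]
      apply Finset.sum_le_sum
      intro S _
      split_ifs
      · exact le_rfl
      · exact hWnn S
  -- conclude by squeezing
  have hcube : Filter.Tendsto (fun n : ℕ => 4*(n:ℝ)*(p n)^3) Filter.atTop (nhds 0) := by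
    have heq : ∀ n : ℕ, 4*(n:ℝ)*(p n)^3 = 4 * (p n * (n:ℝ)^((1:ℝ)/3))^3 := by
      intro n
      rw [mul_pow]
      have : ((n:ℝ)^((1:ℝ)/3))^(3:ℕ) = (n:ℝ) := by
        rw [← Real.rpow_natCast ((n:ℝ)^((1:ℝ)/3)) 3, ← Real.rpow_mul (Nat.cast_nonneg n)]
        norm_num
      rw [this]
      ring
    have h3 : Filter.Tendsto (fun n : ℕ => (p n * (n:ℝ)^((1:ℝ)/3))^3)
        Filter.atTop (nhds 0) := by
      have := hp0.pow 3
      simpa using this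
    have := h3.const_mul (4:ℝ)
    simp only [mul_zero] at this
    refine Filter.Tendsto.congr (fun n => (heq n).symm) this
  have hlow : Filter.Tendsto (fun n : ℕ => 1 - 4*(n:ℝ)*(p n)^3) Filter.atTop (nhds 1) := by
    have := Filter.Tendsto.sub (tendsto_const_nhds (x := (1:ℝ))) hcube
    simpa using this
  exact tendsto_of_tendsto_of_tendsto_of_le_of_le hlow tendsto_const_nhds
    (fun n => (hbound n).1) (fun n => (hbound n).2)
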